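/- Let S be a pseudo-nilpotent finite semigroup with principal series S = S_1 ⊃ ... ⊃ S_{m+1} = ∅. If S_i \ S_{i+1} is not an isolated subset and not a root, then there exists a root S_j \ S_{j+1} with i < j and S_i \ S_{i+1} ⊆ S^{(j)}. Moreover S \ K = ⋃ S^{(i)}, where the union runs over all i with S_i \ S_{i+1} a root and K is the union of all isolated subsets. -/
import Mathlib


/-- One multiplication step `a · w · b` where `w` ranges over `S¹`
(`none` playing the role of the adjoined identity). -/
def mulW {S : Type*} [Semigroup S] (a : S) (w : Option S) (b : S) : S :=
  match w with
  | none => a * b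
  | some c => a * c * b

/-- The Mal'cev sequences: `(malcev x y w n).1 = λ_n` and `(malcev x y w n).2 = ρ_n`,
with `λ_0 = x`, `ρ_0 = y`, `λ_{n+1} = λ_n w_{n+1} ρ_n`, `ρ_{n+1} = ρ_n w_{n+1} λ_n`. -/
def malcev {S : Type*} [Semigroup S] (x y : S) (w : ℕ → Option S) : ℕ → S × S
  | 0 => (x, y)
  | n + 1 =>
      let p := malcev x y w n
      (mulW p.1 (w n) p.2, mulW p.2 (w n) p.1)

/-- Mal'cev nilpotency of a (multiplicatively closed) subset `A` of `S`,
computed with parameters from `A¹`. -/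
def SetMN {S : Type*} [Semigroup S] (A : Set S) : Prop :=
  ∃ n : ℕ, 0 < n ∧ ∀ x ∈ A, ∀ y ∈ A, ∀ w : ℕ → Option S,
    (∀ k c, w k = some c → c ∈ A) →
    (malcev x y w n).1 = (malcev x y w n).2

/-- A semigroup is Mal'cev nilpotent. -/
def IsMN (S : Type*) [Semigroup S] : Prop := SetMN (Set.univ : Set S)

/-- Equality in the Rees quotient by (the possibly empty ideal) `I`. -/
def ReesEq {S : Type*} [Semigroup S] (I : Set S) (a b : S) : Prop :=
  a = b ∨ (a ∈ I ∧ b ∈ I)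

/-- Mal'cev nilpotency of the Rees quotient `A / I` (computed by lifting to `A`). -/
def SetMNMod {S : Type*} [Semigroup S] (I A : Set S) : Prop :=
  ∃ n : ℕ, 0 < n ∧ ∀ x ∈ A, ∀ y ∈ A, ∀ w : ℕ → Option S,
    (∀ k c, w k = some c → c ∈ A) →
    ReesEq I (malcev x y w n).1 (malcev x y w n).2

/-- `I` is an ideal of (the mul-closed subset) `T`; the empty set counts as an ideal. -/
def IsIdealIn {S : Type*} [Semigroup S] (T I : Set S) : Prop :=
  I ⊆ T ∧ ∀ a ∈ I, ∀ t ∈ T, t * a ∈ I ∧ a * t ∈ I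

/-- Edge of the upper non-nilpotent graph `N_S`: `⟨a,b⟩` is not Mal'cev nilpotent. -/
def NEdge {S : Type*} [Semigroup S] (a b : S) : Prop :=
  a ≠ b ∧ ¬ SetMN (Subsemigroup.closure ({a, b} : Set S) : Set S)

/-- The generating set of the subsemigroup `⟨x, y, w_1, …, w_m⟩`. -/
def genSet {S : Type*} [Semigroup S] (x y : S) (w : ℕ → Option S) (m : ℕ) : Set S :=
  {x, y} ∪ {c | ∃ k, k < m ∧ w k = some c}

/-- A pseudo-nilpotent semigroup. -/
def IsPN (S : Type*) [Semigroup S] : Prop :=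
  ∀ (x y : S) (w : ℕ → Option S) (m : ℕ) (I : Set S),
    IsIdealIn (Subsemigroup.closure (genSet x y w m) : Set S) I →
    (malcev x y w m).1 ∉ I → (malcev x y w m).2 ∉ I →
    (∃ t, t < m ∧ (malcev x y w t).1 ≠ (malcev x y w t).2 ∧
      malcev x y w t = malcev x y w m) →
    ∀ i ≤ m, ¬ SetMNMod I
      (Subsemigroup.closure ({(malcev x y w i).1, (malcev x y w i).2} : Set S) : Set S)

/-- A principal series `S = S_1 ⊃ S_2 ⊃ ⋯ ⊃ S_m ⊃ S_{m+1} = ∅` of a semigroup: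
a strictly decreasing chain of ideals with no ideal strictly between consecutive
terms (the empty set counts as an ideal). -/
structure PrincipalSeries (S : Type*) [Semigroup S] where
  m : ℕ
  C : ℕ → Set S
  first : C 1 = Set.univ
  last : C (m + 1) = ∅
  ideal : ∀ i, 1 ≤ i → i ≤ m → IsIdealIn Set.univ (C i)
  ssub : ∀ i, 1 ≤ i → i ≤ m → C (i + 1) ⊂ C i
  maximal : ∀ i, 1 ≤ i → i ≤ m → ∀ I : Set S, IsIdealIn Set.univ I →
    C (i + 1) ⊆ I → I ⊆ C i → I = C (i + 1) ∨ I = C i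

variable {S : Type*} [Semigroup S]

/-- `F_{S_j/S_{j+1}}(S/S_{j+1})`, computed in `S`:  the elements `s ∉ S_j` with
`s·a ≠ θ` or `a·s ≠ θ` in `S/S_{j+1}` for some `a` in the ideal `S_j/S_{j+1}`. -/
def FsetQ (ps : PrincipalSeries S) (j : ℕ) : Set S :=
  {s | s ∉ ps.C j ∧ ∃ a ∈ ps.C j, s * a ∉ ps.C (j + 1) ∨ a * s ∉ ps.C (j + 1)}

/-- `S_i \ S_{i+1}` is a root: the principal factor `S_i/S_{i+1}` is not Mal'cev
nilpotent and there is no `N_S`-edge between `S_i \ S_{i+1}` and `S_{i+1}`. -/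
def Root (ps : PrincipalSeries S) (i : ℕ) : Prop :=
  ¬ SetMNMod (ps.C (i + 1)) (ps.C i) ∧
  ∀ a ∈ ps.C i \ ps.C (i + 1), ∀ b ∈ ps.C (i + 1), ¬ NEdge a b

/-- `S_i \ S_{i+1}` is an isolated subset: it is not a root, and whenever
`S_i \ S_{i+1} ⊆ F_{S_j/S_{j+1}}(S/S_{j+1})` the factor `S_j/S_{j+1}` is nilpotent. -/
def Isolated (ps : PrincipalSeries S) (i : ℕ) : Prop :=
  ¬ Root ps i ∧
  ∀ j, 1 ≤ j → j ≤ ps.m → ps.C i \ ps.C (i + 1) ⊆ FsetQ ps j →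
    SetMNMod (ps.C (j + 1)) (ps.C j)

/-- `K`, the union of all isolated subsets `S_i \ S_{i+1}`. -/
def Kset (ps : PrincipalSeries S) : Set S :=
  {a | ∃ i, 1 ≤ i ∧ i ≤ ps.m ∧ Isolated ps i ∧ a ∈ ps.C i \ ps.C (i + 1)}

/-- The stem `S^{(i)} = F_{S_i/S_{i+1}}(S/S_{i+1}) ∪ (S_i \ S_{i+1})` of a root. -/
def Stem (ps : PrincipalSeries S) (i : ℕ) : Set S :=
  FsetQ ps i ∪ (ps.C i \ ps.C (i + 1))

section Aux

variable {S : Type*} [Semigroup S]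

/-- Two-sided ideal-like predicate (on the whole semigroup). -/
def Ide (I : Set S) : Prop := ∀ a ∈ I, ∀ t : S, t * a ∈ I ∧ a * t ∈ I

lemma mulW_mem_or {I : Set S} (hI : Ide I) {u v : S} (w : Option S)
    (h : u ∈ I ∨ v ∈ I) : mulW u w v ∈ I := by
  cases w with
  | none =>
      show u * v ∈ I
      rcases h with h | h
      · exact (hI u h v).2
      · exact (hI v h u).1
  | some c =>
      show u * c * v ∈ I
      rcases h with h | h
      · exact (hI (u * c) (hI u h c).2 v).2
      · exact (hI v h (u * c)).1

lemma mulW_mem_closed {A : Set S} (hA : ∀ u ∈ A, ∀ v ∈ A, u * v ∈ A) {u v : S} {w : Option S}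
    (hu : u ∈ A) (hv : v ∈ A) (hw : ∀ c, w = some c → c ∈ A) : mulW u w v ∈ A := by
  cases w with
  | none => exact hA u hu v hv
  | some c => exact hA (u * c) (hA u hu c (hw c rfl)) v hv

lemma malcev_succ' (x y : S) (w : ℕ → Option S) (n : ℕ) :
    malcev x y w (n + 1) =
      (mulW (malcev x y w n).1 (w n) (malcev x y w n).2,
       mulW (malcev x y w n).2 (w n) (malcev x y w n).1) := rfl

lemma malcev_mem {A : Set S} (hA : ∀ u ∈ A, ∀ v ∈ A, u * v ∈ A) {x y : S}
    {w : ℕ → Option S} (hx : x ∈ A) (hy : y ∈ A)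
    (hw : ∀ k c, w k = some c → c ∈ A) :
    ∀ n, (malcev x y w n).1 ∈ A ∧ (malcev x y w n).2 ∈ A := by
  intro n
  induction n with
  | zero => exact ⟨hx, hy⟩
  | succ n ih =>
      rw [malcev_succ']
      exact ⟨mulW_mem_closed hA ih.1 ih.2 (fun c hc => hw n c hc),
             mulW_mem_closed hA ih.2 ih.1 (fun c hc => hw n c hc)⟩

lemma malcev_eq_prop {x y : S} {w : ℕ → Option S} {n : ℕ}
    (h : (malcev x y w n).1 = (malcev x y w n).2) :
    ∀ k, n ≤ k → (malcev x y w k).1 = (malcev x y w k).2 := by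
  intro k hk
  induction k, hk using Nat.le_induction with
  | base => exact h
  | succ k _ ih => rw [malcev_succ', ih]

lemma malcev_mem_prop {I : Set S} (hI : Ide I) {x y : S} {w : ℕ → Option S} {n : ℕ}
    (h : (malcev x y w n).1 ∈ I ∨ (malcev x y w n).2 ∈ I) :
    ∀ k, n < k → (malcev x y w k).1 ∈ I ∧ (malcev x y w k).2 ∈ I := by
  intro k hk
  induction k, hk using Nat.le_induction with
  | base =>
      rw [malcev_succ']
      exact ⟨mulW_mem_or hI _ h, mulW_mem_or hI _ h.symm⟩
  | succ k _ ih =>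
      rw [malcev_succ']
      exact ⟨mulW_mem_or hI _ (Or.inl ih.1), mulW_mem_or hI _ (Or.inl ih.2)⟩

/-- Extraction of a clean cycle from a failure of Mal'cev nilpotency. -/
lemma extract [Finite S] {A : Set S} (hA : ∀ u ∈ A, ∀ v ∈ A, u * v ∈ A)
    (H : ∀ n, 0 < n → ∃ x, x ∈ A ∧ ∃ y, y ∈ A ∧ ∃ w : ℕ → Option S,
      (∀ k c, w k = some c → c ∈ A) ∧ (malcev x y w n).1 ≠ (malcev x y w n).2) :
    ∃ x, x ∈ A ∧ ∃ y, y ∈ A ∧ ∃ w : ℕ → Option S, ∃ p : ℕ,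
      (∀ k c, w k = some c → c ∈ A) ∧ 0 < p ∧ malcev x y w p = (x, y) ∧
      ∀ k, k ≤ p → (malcev x y w k).1 ≠ (malcev x y w k).2 := by
  classical
  have : Fintype S := Fintype.ofFinite S
  set N := Fintype.card (S × S) with hN
  obtain ⟨x, hx, y, hy, w, hw, hne⟩ := H (N + 1) (Nat.succ_pos N)
  have hneq : ∀ k, k ≤ N + 1 → (malcev x y w k).1 ≠ (malcev x y w k).2 := by
    intro k hk h
    exact hne (malcev_eq_prop h (N + 1) hk)
  have hcard : Fintype.card (S × S) < Fintype.card (Fin (N + 1)) := by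
    simp [hN]
  obtain ⟨i, j, hij, hfeq⟩ :=
    Fintype.exists_ne_map_eq_of_card_lt (fun t : Fin (N + 1) => malcev x y w t) hcard
  have aux : ∀ t t' : ℕ, t < t' → t' ≤ N + 1 → malcev x y w t = malcev x y w t' →
      ∃ x, x ∈ A ∧ ∃ y, y ∈ A ∧ ∃ w : ℕ → Option S, ∃ p : ℕ,
      (∀ k c, w k = some c → c ∈ A) ∧ 0 < p ∧ malcev x y w p = (x, y) ∧
      ∀ k, k ≤ p → (malcev x y w k).1 ≠ (malcev x y w k).2 := by
    intro t t' htt' ht' hfe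
    have hp : 0 < t' - t := Nat.sub_pos_of_lt htt'
    have key : ∀ k, k ≤ t' - t →
        malcev (malcev x y w t).1 (malcev x y w t).2 (fun k => w (t + k % (t' - t))) k =
          malcev x y w (t + k) := by
      intro k hk
      induction k with
      | zero =>
          rw [Nat.add_zero]
          exact Prod.mk.eta
      | succ k ih =>
          have hklt : k < t' - t := hk
          have heq : t + (k + 1) = (t + k) + 1 := rfl
          rw [heq, malcev_succ', malcev_succ', ih (le_of_lt hklt)]
          simp only [Nat.mod_eq_of_lt hklt]
    have hmem := malcev_mem hA hx hy hw t
    refine ⟨(malcev x y w t).1, hmem.1, (malcev x y w t).2, hmem.2,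
      (fun k => w (t + k % (t' - t))), t' - t, ?_, hp, ?_, ?_⟩
    · intro k c hc
      exact hw _ c hc
    · have h1 := key (t' - t) le_rfl
      have h2 : t + (t' - t) = t' := by omega
      rw [h1, h2, ← hfe]
    · intro k hk
      rw [key k hk]
      exact hneq (t + k) (by omega)
  rcases lt_or_gt_of_ne hij with h | h
  · exact aux i.1 j.1 h (by omega) hfeq
  · exact aux j.1 i.1 h (by omega) hfeq.symm

lemma comm_single_a {a : S} : ∀ u ∈ Subsemigroup.closure ({a} : Set S), u * a = a * u := by
  intro u hu
  induction hu using Subsemigroup.closure_induction with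
  | mem x hx =>
      rcases hx with rfl
      rfl
  | mul x y hx hy ihx ihy =>
      rw [mul_assoc, ihy, ← mul_assoc, ihx, mul_assoc]

lemma comm_single {a u v : S} (hu : u ∈ Subsemigroup.closure ({a} : Set S))
    (hv : v ∈ Subsemigroup.closure ({a} : Set S)) : u * v = v * u := by
  induction hv using Subsemigroup.closure_induction with
  | mem x hx =>
      rcases hx with rfl
      exact comm_single_a u hu
  | mul x y hx hy ihx ihy =>
      rw [← mul_assoc, ihx, mul_assoc, ihy, ← mul_assoc]

lemma closure_subset_of {s U : Set S} (hU : ∀ u ∈ U, ∀ v ∈ U, u * v ∈ U) (hs : s ⊆ U) :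
    (Subsemigroup.closure s : Set S) ⊆ U := by
  intro z hz
  exact Subsemigroup.closure_le (S := ⟨U, fun {u v} hu hv => hU u hu v hv⟩) |>.mpr hs hz

lemma inter_ideal (T : Subsemigroup S) {J : Set S} (hJ : Ide J) :
    IsIdealIn (T : Set S) (J ∩ (T : Set S)) := by
  refine ⟨Set.inter_subset_right, ?_⟩
  intro u hu t ht
  exact ⟨⟨(hJ u hu.1 t).1, T.mul_mem ht hu.2⟩, ⟨(hJ u hu.1 t).2, T.mul_mem hu.2 ht⟩⟩

lemma setMNMod_of_comm {A I : Set S} (hcomm : ∀ u ∈ A, ∀ v ∈ A, u * v = v * u) :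
    SetMNMod I A := by
  refine ⟨1, one_pos, ?_⟩
  intro x hx y hy w hw
  left
  show mulW x (w 0) y = mulW y (w 0) x
  cases hw0 : w 0 with
  | none => exact hcomm x hx y hy
  | some c =>
      have hc : c ∈ A := hw 0 c hw0
      show x * c * y = y * c * x
      rw [hcomm x hx c hc, mul_assoc, hcomm x hx y hy, ← mul_assoc, hcomm c hc y hy]

lemma pn_not_nilp (hPN : IsPN S) {x y : S} {w : ℕ → Option S} {p : ℕ} (hp : 0 < p)
    (hcyc : malcev x y w p = (x, y)) (hxy : x ≠ y) {J : Set S} (hJ : Ide J)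
    (hxJ : x ∉ J) (hyJ : y ∉ J) :
    ¬ SetMNMod (J ∩ (Subsemigroup.closure (genSet x y w p) : Set S))
      (Subsemigroup.closure ({x, y} : Set S) : Set S) := by
  have h0 : malcev x y w 0 = (x, y) := rfl
  have h := hPN x y w p (J ∩ (Subsemigroup.closure (genSet x y w p) : Set S))
    (inter_ideal _ hJ)
    (by rw [hcyc]; exact fun hc => hxJ hc.1)
    (by rw [hcyc]; exact fun hc => hyJ hc.1)
    ⟨0, hp, by rw [h0]; exact hxy, by rw [h0, hcyc]⟩ 0 (Nat.zero_le p)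
  rw [h0] at h
  exact h

end Aux
section PS

variable {S : Type*} [Semigroup S] (ps : PrincipalSeries S)

lemma ideC (k : ℕ) (h1 : 1 ≤ k) (h2 : k ≤ ps.m + 1) : Ide (ps.C k) := by
  rcases Nat.lt_or_ge k (ps.m + 1) with h | h
  · have hid := ps.ideal k h1 (by omega)
    intro a ha t
    exact hid.2 a ha t (Set.mem_univ t)
  · have hk : k = ps.m + 1 := le_antisymm h2 h
    intro a ha
    rw [hk, ps.last] at ha
    exact absurd ha (Set.notMem_empty a)

lemma C_mono {k l : ℕ} (h1 : 1 ≤ k) (hkl : k ≤ l) (h2 : l ≤ ps.m + 1) :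
    ps.C l ⊆ ps.C k := by
  induction l, hkl using Nat.le_induction with
  | base => exact subset_rfl
  | succ l hl ih =>
      exact fun z hz => ih (by omega) ((ps.ssub l (by omega) (by omega)).subset hz)

lemma m_pos [Nonempty S] : 1 ≤ ps.m := by
  by_contra h
  have h0 : ps.m = 0 := by omega
  have h1 : (Set.univ : Set S) = ∅ := by
    rw [← ps.first]
    have := ps.last
    rw [h0] at this
    exact this
  exact absurd (h1 ▸ Set.mem_univ (Classical.arbitrary S)) (Set.notMem_empty _)

lemma exists_layer [Nonempty S] (a : S) :
    ∃ i, 1 ≤ i ∧ i ≤ ps.m ∧ a ∈ ps.C i ∧ a ∉ ps.C (i + 1) := by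
  classical
  set q := Nat.findGreatest (fun k => a ∈ ps.C k) ps.m with hq
  have h1 : a ∈ ps.C 1 := by rw [ps.first]; trivial
  have hq1 : 1 ≤ q := Nat.le_findGreatest (m_pos ps) h1
  have hqm : q ≤ ps.m := Nat.findGreatest_le _
  have hmem : a ∈ ps.C q := Nat.findGreatest_spec (P := fun k => a ∈ ps.C k) (m_pos ps) h1
  have hnot : a ∉ ps.C (q + 1) := by
    rcases Nat.lt_or_ge q ps.m with h | h
    · exact Nat.findGreatest_is_greatest (Nat.lt_succ_self q) (by omega)
    · have : q = ps.m := by omega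
      rw [this, ps.last]
      exact Set.notMem_empty a
  exact ⟨q, hq1, hqm, hmem, hnot⟩

/-- The two-sided annihilator of the factor `C q / C (q+1)`. -/
def Tann (q : ℕ) : Set S :=
  {r | ∀ e ∈ ps.C q, r * e ∈ ps.C (q + 1) ∧ e * r ∈ ps.C (q + 1)}

lemma Tann_ide (q : ℕ) (h1 : 1 ≤ q) (h2 : q ≤ ps.m) : Ide (Tann ps q) := by
  intro r hr t
  constructor
  · intro e he
    constructor
    · rw [mul_assoc]
      exact (ideC ps (q + 1) (by omega) (by omega) (r * e) (hr e he).1 t).1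
    · rw [← mul_assoc]
      exact (hr (e * t) (ideC ps q h1 (by omega) e he t).2).2
  · intro e he
    constructor
    · rw [mul_assoc]
      exact (hr (t * e) (ideC ps q h1 (by omega) e he t).1).1
    · rw [← mul_assoc]
      exact (ideC ps (q + 1) (by omega) (by omega) (e * r) (hr e he).2 t).2

lemma not_Tann_of_F {s : S} {q : ℕ} (h : s ∈ FsetQ ps q) : s ∉ Tann ps q := by
  obtain ⟨_, e, he, hor⟩ := h
  intro hT
  rcases hor with h' | h'
  · exact h' (hT e he).1
  · exact h' (hT e he).2

lemma F_of_not_Tann {s : S} {q : ℕ} (h1 : s ∉ ps.C q) (h2 : s ∉ Tann ps q) :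
    s ∈ FsetQ ps q := by
  refine ⟨h1, ?_⟩
  by_contra h
  push_neg at h
  exact h2 (fun e he => ⟨(h e he).1, (h e he).2⟩)

lemma layer_F_all {i q : ℕ} {u : S} (hi1 : 1 ≤ i) (him : i ≤ ps.m) (hqm : q ≤ ps.m)
    (hiq : i < q) (hu : u ∈ ps.C i \ ps.C (i + 1)) (huF : u ∈ FsetQ ps q) :
    ∀ v ∈ ps.C i \ ps.C (i + 1), v ∈ FsetQ ps q := by
  intro v hv
  have hvq : v ∉ ps.C q := fun h => hv.2 (C_mono ps (by omega) (by omega) (by omega) h)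
  refine F_of_not_Tann ps hvq ?_
  intro hvT
  set I₀ : Set S := (Tann ps q ∩ ps.C i) ∪ ps.C (i + 1) with hI₀
  have hTide := Tann_ide ps q (by omega) hqm
  have hIdl : IsIdealIn Set.univ I₀ := by
    refine ⟨Set.subset_univ _, ?_⟩
    rintro a (⟨haT, haC⟩ | haC) t -
    · exact ⟨Or.inl ⟨(hTide a haT t).1, (ideC ps i hi1 (by omega) a haC t).1⟩,
        Or.inl ⟨(hTide a haT t).2, (ideC ps i hi1 (by omega) a haC t).2⟩⟩
    · exact ⟨Or.inr (ideC ps (i + 1) (by omega) (by omega) a haC t).1,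
        Or.inr (ideC ps (i + 1) (by omega) (by omega) a haC t).2⟩
  have hsub1 : ps.C (i + 1) ⊆ I₀ := fun z hz => Or.inr hz
  have hsub2 : I₀ ⊆ ps.C i := by
    rintro z (⟨_, h⟩ | h)
    · exact h
    · exact (ps.ssub i hi1 him).subset h
  rcases ps.maximal i hi1 him I₀ hIdl hsub1 hsub2 with h | h
  · exact hv.2 (h ▸ (Or.inl ⟨hvT, hv.1⟩ : v ∈ I₀))
  · have hu0 : u ∈ I₀ := h.symm ▸ hu.1
    rcases hu0 with ⟨huT, _⟩ | h'
    · exact not_Tann_of_F ps huF huT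
    · exact hu.2 h'

lemma F_trans {i j q : ℕ} (hi1 : 1 ≤ i) (hij : i < j) (hjq : j < q) (hqm : q ≤ ps.m)
    (hF1 : ps.C i \ ps.C (i + 1) ⊆ FsetQ ps j)
    (hF2 : ps.C j \ ps.C (j + 1) ⊆ FsetQ ps q) :
    ps.C i \ ps.C (i + 1) ⊆ FsetQ ps q := by
  intro s hs
  have hsq : s ∉ ps.C q := fun h => hs.2 (C_mono ps (by omega) (by omega) (by omega) h)
  refine F_of_not_Tann ps hsq ?_
  intro hsT
  obtain ⟨hsCj, e, heCj, hor⟩ := hF1 hs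
  have hTide := Tann_ide ps q (by omega) hqm
  rcases hor with h' | h'
  · have hd : s * e ∈ ps.C j \ ps.C (j + 1) :=
      ⟨(ideC ps j (by omega) (by omega) e heCj s).1, h'⟩
    exact not_Tann_of_F ps (hF2 hd) (hTide s hsT e).2
  · have hd : e * s ∈ ps.C j \ ps.C (j + 1) :=
      ⟨(ideC ps j (by omega) (by omega) e heCj s).2, h'⟩
    exact not_Tann_of_F ps (hF2 hd) (hTide s hsT e).1

end PS
section Main

variable {S : Type*} [Semigroup S]

lemma edge_down [Finite S] [Nonempty S] (hPN : IsPN S) (ps : PrincipalSeries S)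
    {j : ℕ} (hj1 : 1 ≤ j) (hjm : j ≤ ps.m) {a b : S}
    (haj : a ∈ ps.C j) (haj1 : a ∉ ps.C (j + 1)) (hb : b ∈ ps.C (j + 1))
    (hE : NEdge a b) :
    ∃ q, j < q ∧ q ≤ ps.m ∧ ¬ SetMNMod (ps.C (q + 1)) (ps.C q) ∧ a ∈ FsetQ ps q := by
  classical
  set A : Set S := (Subsemigroup.closure ({a, b} : Set S) : Set S) with hA_def
  have hA : ∀ u ∈ A, ∀ v ∈ A, u * v ∈ A := fun u hu v hv =>
    Subsemigroup.mul_mem _ hu hv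
  have haA : a ∈ A := Subsemigroup.subset_closure (by simp)
  have hbA : b ∈ A := Subsemigroup.subset_closure (by simp)
  have hH : ∀ n, 0 < n → ∃ x, x ∈ A ∧ ∃ y, y ∈ A ∧ ∃ w : ℕ → Option S,
      (∀ k c, w k = some c → c ∈ A) ∧ (malcev x y w n).1 ≠ (malcev x y w n).2 := by
    intro n hn
    by_contra hcon
    refine hE.2 ⟨n, hn, fun x hx y hy w hw => ?_⟩
    by_contra hne
    exact hcon ⟨x, hx, y, hy, w, hw, hne⟩
  obtain ⟨x, hx, y, hy, w, p, hw, hp, hcyc, hneq⟩ := extract hA hH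
  have hne0 : x ≠ y := hneq 0 (Nat.zero_le p)
  by_cases hxCj : x ∈ ps.C (j + 1)
  · -- deep case : the cycle lives strictly below level j
    have hjm' : j < ps.m := by
      rcases Nat.lt_or_ge j ps.m with h | h
      · exact h
      · exfalso
        have hjm2 : j = ps.m := by omega
        rw [hjm2, ps.last] at hxCj
        exact absurd hxCj (Set.notMem_empty x)
    set q := Nat.findGreatest (fun k => x ∈ ps.C k) ps.m with hqdef
    have hq_lb : j + 1 ≤ q := Nat.le_findGreatest (by omega) hxCj
    have hq1 : 1 ≤ q := by omega
    have hqm : q ≤ ps.m := Nat.findGreatest_le _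
    have hxq : x ∈ ps.C q := Nat.findGreatest_spec (P := fun k => x ∈ ps.C k) (m := j + 1) (by omega) hxCj
    have hxq1 : x ∉ ps.C (q + 1) := by
      rcases Nat.lt_or_ge q ps.m with h | h
      · exact Nat.findGreatest_is_greatest (Nat.lt_succ_self q) (by omega)
      · have hq' : q = ps.m := by omega
        rw [hq', ps.last]
        exact Set.notMem_empty x
    have hIq : Ide (ps.C q) := ideC ps q hq1 (by omega)
    have hIq1 : Ide (ps.C (q + 1)) := ideC ps (q + 1) (by omega) (by omega)
    have hyq : y ∈ ps.C q := by
      have h2 := malcev_mem_prop hIq (n := 0)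
        (Or.inl (show (malcev x y w 0).1 ∈ ps.C q from hxq)) p hp
      rw [hcyc] at h2
      exact h2.2
    have hyq1 : y ∉ ps.C (q + 1) := by
      intro hyC
      have h2 := malcev_mem_prop hIq1 (n := 0)
        (Or.inr (show (malcev x y w 0).2 ∈ ps.C (q + 1) from hyC)) p hp
      rw [hcyc] at h2
      exact hxq1 h2.1
    have hnotq1 : ∀ k, k ≤ p →
        (malcev x y w k).1 ∉ ps.C (q + 1) ∧ (malcev x y w k).2 ∉ ps.C (q + 1) := by
      intro k hk
      rcases Nat.eq_or_lt_of_le hk with rfl | hklt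
      · rw [hcyc]
        exact ⟨hxq1, hyq1⟩
      · constructor <;> intro hC
        · have h2 := malcev_mem_prop hIq1 (Or.inl hC) p hklt
          rw [hcyc] at h2
          exact hxq1 h2.1
        · have h2 := malcev_mem_prop hIq1 (Or.inr hC) p hklt
          rw [hcyc] at h2
          exact hxq1 h2.1
    have hTide := Tann_ide ps q hq1 hqm
    -- a is not in the annihilator of the factor C q / C (q+1)
    have haT : a ∉ Tann ps q := by
      intro haTann
      have hsubU : A ⊆ (Subsemigroup.closure ({b} : Set S) : Set S) ∪ Tann ps q := by
        rw [hA_def]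
        apply closure_subset_of
        · intro u hu v hv
          rcases hu with hu | hu
          · rcases hv with hv | hv
            · exact Or.inl (Subsemigroup.mul_mem _ hu hv)
            · exact Or.inr (hTide v hv u).1
          · exact Or.inr (hTide u hu v).2
        · rintro z (rfl | rfl)
          · exact Or.inr haTann
          · exact Or.inl (Subsemigroup.subset_closure rfl)
      have hxT : x ∉ Tann ps q := by
        intro hxT'
        apply (hnotq1 1 hp).1
        show mulW x (w 0) y ∈ ps.C (q + 1)
        cases hw0 : w 0 with
        | none => exact (hxT' y hyq).1
        | some c =>
            show x * c * y ∈ ps.C (q + 1)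
            rw [mul_assoc]
            exact (hxT' (c * y) (hIq y hyq c).1).1
      have hyT : y ∉ Tann ps q := by
        intro hyT'
        apply (hnotq1 1 hp).2
        show mulW y (w 0) x ∈ ps.C (q + 1)
        cases hw0 : w 0 with
        | none => exact (hyT' x hxq).1
        | some c =>
            show y * c * x ∈ ps.C (q + 1)
            rw [mul_assoc]
            exact (hyT' (c * x) (hIq x hxq c).1).1
      have hxb : x ∈ (Subsemigroup.closure ({b} : Set S) : Set S) :=
        (hsubU hx).resolve_right hxT
      have hyb : y ∈ (Subsemigroup.closure ({b} : Set S) : Set S) :=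
        (hsubU hy).resolve_right hyT
      apply hneq 1 hp
      show mulW x (w 0) y = mulW y (w 0) x
      cases hw0 : w 0 with
      | none => exact comm_single hxb hyb
      | some c =>
          have hcA : c ∈ A := hw 0 c hw0
          have hcT : c ∉ Tann ps q := by
            intro hcT'
            apply (hnotq1 1 hp).1
            show mulW x (w 0) y ∈ ps.C (q + 1)
            rw [hw0]
            show x * c * y ∈ ps.C (q + 1)
            exact ((hTide c hcT' x).1 y hyq).1
          have hcb : c ∈ (Subsemigroup.closure ({b} : Set S) : Set S) :=
            (hsubU hcA).resolve_right hcT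
          show x * c * y = y * c * x
          rw [comm_single hxb hcb, mul_assoc, comm_single hxb hyb, ← mul_assoc,
            comm_single hcb hyb]
    have haCq : a ∉ ps.C q := fun h => haj1 (C_mono ps (by omega) hq_lb (by omega) h)
    refine ⟨q, Nat.lt_of_lt_of_le (Nat.lt_succ_self j) hq_lb, hqm, ?_, F_of_not_Tann ps haCq haT⟩
    -- the factor C q / C (q+1) is not nilpotent
    intro hSM
    apply pn_not_nilp hPN hp hcyc hne0 hIq1 hxq1 hyq1
    obtain ⟨n, hn, hbound⟩ := hSM
    have hclosed : ∀ u ∈ (Subsemigroup.closure ({x, y} : Set S) : Set S),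
        ∀ v ∈ (Subsemigroup.closure ({x, y} : Set S) : Set S),
        u * v ∈ (Subsemigroup.closure ({x, y} : Set S) : Set S) :=
      fun u hu v hv => Subsemigroup.mul_mem _ hu hv
    have hsubq : (Subsemigroup.closure ({x, y} : Set S) : Set S) ⊆ ps.C q := by
      apply closure_subset_of (fun u hu v hv => (hIq v hv u).1)
      rintro z (rfl | rfl)
      · exact hxq
      · exact hyq
    have hsubT : (Subsemigroup.closure ({x, y} : Set S) : Set S) ⊆
        (Subsemigroup.closure (genSet x y w p) : Set S) := by
      apply closure_subset_of (fun u hu v hv => Subsemigroup.mul_mem _ hu hv)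
      intro z hz
      exact Subsemigroup.subset_closure (Set.mem_union_left _ hz)
    refine ⟨n, hn, ?_⟩
    intro x₂ hx₂ y₂ hy₂ w₂ hw₂
    have h2 := hbound x₂ (hsubq hx₂) y₂ (hsubq hy₂) w₂ (fun k c hc => hsubq (hw₂ k c hc))
    rcases h2 with h2 | h2
    · exact Or.inl h2
    · have hmem := malcev_mem hclosed hx₂ hy₂ hw₂ n
      exact Or.inr ⟨⟨h2.1, hsubT hmem.1⟩, ⟨h2.2, hsubT hmem.2⟩⟩
  · -- shallow case : a contradiction
    exfalso
    have hIde1 : Ide (ps.C (j + 1)) := ideC ps (j + 1) (by omega) (by omega)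
    have hyCj : y ∉ ps.C (j + 1) := by
      intro hyC
      have h2 := malcev_mem_prop hIde1 (n := 0)
        (Or.inr (show (malcev x y w 0).2 ∈ ps.C (j + 1) from hyC)) p hp
      rw [hcyc] at h2
      exact hxCj h2.1
    have hsubU : A ⊆ (Subsemigroup.closure ({a} : Set S) : Set S) ∪ ps.C (j + 1) := by
      rw [hA_def]
      apply closure_subset_of
      · intro u hu v hv
        rcases hu with hu | hu
        · rcases hv with hv | hv
          · exact Or.inl (Subsemigroup.mul_mem _ hu hv)
          · exact Or.inr (hIde1 v hv u).1
        · exact Or.inr (hIde1 u hu v).2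
      · rintro z (rfl | rfl)
        · exact Or.inl (Subsemigroup.subset_closure rfl)
        · exact Or.inr hb
    have hxg : x ∈ (Subsemigroup.closure ({a} : Set S) : Set S) :=
      (hsubU hx).resolve_right hxCj
    have hyg : y ∈ (Subsemigroup.closure ({a} : Set S) : Set S) :=
      (hsubU hy).resolve_right hyCj
    apply pn_not_nilp hPN hp hcyc hne0 hIde1 hxCj hyCj
    apply setMNMod_of_comm
    have hsub2 : (Subsemigroup.closure ({x, y} : Set S) : Set S) ⊆
        (Subsemigroup.closure ({a} : Set S) : Set S) := by
      apply closure_subset_of (fun u hu v hv => Subsemigroup.mul_mem _ hu hv)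
      rintro z (rfl | rfl)
      · exact hxg
      · exact hyg
    exact fun u hu v hv => comm_single (hsub2 hu) (hsub2 hv)

lemma to_root [Finite S] [Nonempty S] (hPN : IsPN S) (ps : PrincipalSeries S)
    {i : ℕ} (hi1 : 1 ≤ i) :
    ∀ d j, ps.m - j ≤ d → 1 ≤ j → j ≤ ps.m → i < j →
      (ps.C i \ ps.C (i + 1) ⊆ FsetQ ps j) → ¬ SetMNMod (ps.C (j + 1)) (ps.C j) →
      ∃ j', i < j' ∧ j' ≤ ps.m ∧ Root ps j' ∧ ps.C i \ ps.C (i + 1) ⊆ FsetQ ps j' := by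
  intro d
  induction d with
  | zero =>
      intro j hd h1 h2 hij hF hNN
      by_cases hQ : ∀ a' ∈ ps.C j \ ps.C (j + 1), ∀ b' ∈ ps.C (j + 1), ¬ NEdge a' b'
      · exact ⟨j, hij, h2, ⟨hNN, hQ⟩, hF⟩
      · push_neg at hQ
        obtain ⟨a', ha', b', hb', hE⟩ := hQ
        obtain ⟨q, hjq, hqm, _, _⟩ := edge_down hPN ps h1 h2 ha'.1 ha'.2 hb' hE
        omega
  | succ d ih =>
      intro j hd h1 h2 hij hF hNN
      by_cases hQ : ∀ a' ∈ ps.C j \ ps.C (j + 1), ∀ b' ∈ ps.C (j + 1), ¬ NEdge a' b'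
      · exact ⟨j, hij, h2, ⟨hNN, hQ⟩, hF⟩
      · push_neg at hQ
        obtain ⟨a', ha', b', hb', hE⟩ := hQ
        obtain ⟨q, hjq, hqm, hNNq, haF⟩ := edge_down hPN ps h1 h2 ha'.1 ha'.2 hb' hE
        have hFjq : ps.C j \ ps.C (j + 1) ⊆ FsetQ ps q :=
          fun v hv => layer_F_all ps h1 h2 hqm hjq ha' haF v hv
        have hFiq : ps.C i \ ps.C (i + 1) ⊆ FsetQ ps q :=
          F_trans ps hi1 hij hjq hqm hF hFjq
        exact ih q (by omega) (by omega) hqm (by omega) hFiq hNNq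

end Main
/-- If `S_i \ S_{i+1}` is neither an isolated subset nor a root, then it lies in
the stem of some root `S_j \ S_{j+1}` with `i < j`; moreover `S \ K` is the union
of the stems of all the roots. -/
theorem stmt14 {S : Type*} [Semigroup S] [Finite S] [Nonempty S]
    (hPN : IsPN S) (ps : PrincipalSeries S) :
    (∀ i, 1 ≤ i → i ≤ ps.m → ¬ Isolated ps i → ¬ Root ps i →
      ∃ j, i < j ∧ j ≤ ps.m ∧ Root ps j ∧
        ps.C i \ ps.C (i + 1) ⊆ Stem ps j) ∧
    Set.univ \ Kset ps =
      {a : S | ∃ j, 1 ≤ j ∧ j ≤ ps.m ∧ Root ps j ∧ a ∈ Stem ps j} := by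
  have part1 : ∀ i, 1 ≤ i → i ≤ ps.m → ¬ Isolated ps i → ¬ Root ps i →
      ∃ j, i < j ∧ j ≤ ps.m ∧ Root ps j ∧ ps.C i \ ps.C (i + 1) ⊆ Stem ps j := by
    intro i hi1 him hNI hNR
    have hex : ∃ j, 1 ≤ j ∧ j ≤ ps.m ∧ (ps.C i \ ps.C (i + 1) ⊆ FsetQ ps j) ∧
        ¬ SetMNMod (ps.C (j + 1)) (ps.C j) := by
      by_contra hcon
      apply hNI
      refine ⟨hNR, fun j h1 h2 h3 => ?_⟩
      by_contra hMN
      exact hcon ⟨j, h1, h2, h3, hMN⟩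
    obtain ⟨j, hj1, hjm, hF, hNN⟩ := hex
    have hij : i < j := by
      obtain ⟨u, huC, huN⟩ := Set.exists_of_ssubset (ps.ssub i hi1 him)
      have huF := hF ⟨huC, huN⟩
      by_contra hle
      push_neg at hle
      exact huF.1 (C_mono ps hj1 hle (by omega) huC)
    obtain ⟨j', hij', hj'm, hRoot, hF'⟩ :=
      to_root hPN ps hi1 (ps.m - j) j le_rfl hj1 hjm hij hF hNN
    exact ⟨j', hij', hj'm, hRoot, fun s hs => Set.mem_union_left _ (hF' hs)⟩
  refine ⟨part1, ?_⟩
  ext a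
  simp only [Set.mem_diff, Set.mem_univ, true_and, Set.mem_setOf_eq]
  constructor
  · intro hK
    obtain ⟨i, hi1, him, haC, haN⟩ := exists_layer ps a
    have hNI : ¬ Isolated ps i := fun hIso => hK ⟨i, hi1, him, hIso, haC, haN⟩
    by_cases hR : Root ps i
    · exact ⟨i, hi1, him, hR, Set.mem_union_right _ ⟨haC, haN⟩⟩
    · obtain ⟨j, hij, hjm, hRoot, hStem⟩ := part1 i hi1 him hNI hR
      exact ⟨j, by omega, hjm, hRoot, hStem ⟨haC, haN⟩⟩
  · rintro ⟨j, hj1, hjm, hRoot, hStem⟩ hK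
    obtain ⟨i, hi1, him, hIso, haC, haN⟩ := hK
    rcases hStem with haF | haL
    · have hij : i < j := by
        by_contra hle
        push_neg at hle
        exact haF.1 (C_mono ps hj1 hle (by omega) haC)
      have hFsub : ps.C i \ ps.C (i + 1) ⊆ FsetQ ps j :=
        fun v hv => layer_F_all ps hi1 him hjm hij ⟨haC, haN⟩ haF v hv
      exact hRoot.1 (hIso.2 j hj1 hjm hFsub)
    · have hij : i = j := by
        rcases lt_trichotomy i j with h | h | h
        · exact absurd (C_mono ps (by omega) (by omega : i + 1 ≤ j) (by omega) haL.1) haN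
        · exact h
        · exact absurd (C_mono ps (by omega) (by omega : j + 1 ≤ i) (by omega) haC) haL.2
      exact hIso.1 (by rw [hij]; exact hRoot)
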